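/- Let R be a commutative ring, M an R-module, S a multiplicatively closed subset of R, and 𝔓 a prime ideal of the localization R_S. Then 𝔓 is Krull-associated to the R_S-module M_S if and only if the preimage 𝔓 ∩ R of 𝔓 in R is Krull-associated to M. -/

import Mathlib

section Defs

variable (A L : Type*) [CommRing A] [AddCommGroup L] [Module A L]

/-- `a ∈ A` is a zero divisor for the module `L`:
`a • y = 0` for some `y ≠ 0` in `L`. -/
def IsZeroDivisorFor (a : A) : Prop := ∃ y : L, y ≠ 0 ∧ a • y = 0

/-- `a ∈ A` is nilpotent for the module `L`: for every `y ∈ L` there is `n`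
with `a ^ n • y = 0`. -/
def IsNilpotentFor (a : A) : Prop := ∀ y : L, ∃ n : ℕ, a ^ n • y = 0

/-- `L` is `q`-coprimary: `L ≠ 0`, every zero divisor for `L` lies in `q`,
and every element of `q` is nilpotent for `L`. -/
def IsCoprimaryFor (q : Ideal A) : Prop :=
  (∃ y : L, y ≠ 0) ∧ (∀ a : A, IsZeroDivisorFor A L a → a ∈ q) ∧
    ∀ a ∈ q, IsNilpotentFor A L a

/-- A submodule `N` of `L` is `q`-primary in `L` iff `L ⧸ N` is `q`-coprimary. -/
def IsPrimaryIn (N : Submodule A L) (q : Ideal A) : Prop :=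
  IsCoprimaryFor A (L ⧸ N) q

/-- The `S`-component of `N` in `L`: `{x ∈ L | ∃ s ∈ S, s • x ∈ N}`,
for an arbitrary subset `S ⊆ A`. -/
def sComp (S : Set A) (N : Submodule A L) : Set L := {x : L | ∃ s ∈ S, s • x ∈ N}

/-- A prime ideal `p` is Krull-associated to `L` iff for every multiplicatively
closed subset `T ⊋ A ∖ p` one has `T^L((0)) ⊋ (A ∖ p)^L((0))`. -/
def KrullAssociated (p : Ideal A) : Prop :=
  ∀ T : Submonoid A, ((p : Set A)ᶜ ⊂ (T : Set A)) →
    sComp A L ((p : Set A)ᶜ) ⊥ ⊂ sComp A L (T : Set A) ⊥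

end Defs

set_option linter.unusedSectionVars false

section Aux

variable {R M : Type*} [CommRing R] [AddCommGroup M] [Module R M] (S : Submonoid R)

lemma lmk_eq_zero {x : M} (u : S) :
    (LocalizedModule.mk x u : LocalizedModule S M) = 0 ↔ ∃ c : S, (c : R) • x = 0 := by
  rw [show (0 : LocalizedModule S M) = LocalizedModule.mk 0 1 from
    (LocalizedModule.zero_mk 1).symm, LocalizedModule.mk_eq]
  simp [Submonoid.smul_def]

lemma mk_mul_algebraMap (a : R) (s : S) :
    Localization.mk a s * algebraMap R (Localization S) (s : R)
      = algebraMap R (Localization S) a := by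
  rw [← Localization.mk_one_eq_algebraMap, ← Localization.mk_one_eq_algebraMap,
    Localization.mk_mul, Localization.mk_eq_mk_iff, Localization.r_iff_exists]
  exact ⟨1, by push_cast; ring⟩

variable (𝔓 : Ideal (Localization S)) [𝔓.IsPrime]

lemma lmk_mem_iff (a : R) (s : S) :
    Localization.mk a s ∈ 𝔓 ↔ a ∈ 𝔓.comap (algebraMap R (Localization S)) := by
  rw [Localization.mk_eq_mk', IsLocalization.mk'_mem_iff, Ideal.mem_comap]

lemma coe_not_mem_comap (s : S) : (s : R) ∉ 𝔓.comap (algebraMap R (Localization S)) := by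
  intro h
  rw [Ideal.mem_comap] at h
  exact (‹𝔓.IsPrime›.1) (Ideal.eq_top_of_isUnit_mem _ h
    (IsLocalization.map_units (Localization S) s))

lemma mk_mem_sComp_iff (x : M) (u : S) :
    LocalizedModule.mk x u ∈ sComp (Localization S) (LocalizedModule S M) ((𝔓 : Set _)ᶜ) ⊥ ↔
      x ∈ sComp R M ((𝔓.comap (algebraMap R (Localization S)) : Set R)ᶜ) ⊥ := by
  have hp : (𝔓.comap (algebraMap R (Localization S))).IsPrime := Ideal.IsPrime.comap _
  constructor
  · rintro ⟨z, hz, hz0⟩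
    obtain ⟨⟨a, t⟩, rfl⟩ : ∃ y : R × S, z = Localization.mk y.1 y.2 :=
      Localization.induction_on z fun y => ⟨y, rfl⟩
    rw [Set.mem_compl_iff, SetLike.mem_coe, lmk_mem_iff] at hz
    rw [Submodule.mem_bot, LocalizedModule.mk_smul_mk, lmk_eq_zero] at hz0
    obtain ⟨c, hc⟩ := hz0
    refine ⟨(c : R) * a, ?_, ?_⟩
    · rw [Set.mem_compl_iff, SetLike.mem_coe, hp.mul_mem_iff_mem_or_mem]
      rintro (h | h)
      · exact coe_not_mem_comap S 𝔓 c h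
      · exact hz h
    · rw [Submodule.mem_bot, mul_smul]
      exact hc
  · rintro ⟨r, hr, hr0⟩
    rw [Set.mem_compl_iff, SetLike.mem_coe] at hr
    rw [Submodule.mem_bot] at hr0
    refine ⟨algebraMap R (Localization S) r, ?_, ?_⟩
    · rw [Set.mem_compl_iff, SetLike.mem_coe, ← Ideal.mem_comap]
      exact hr
    · rw [Submodule.mem_bot, ← Localization.mk_one_eq_algebraMap, LocalizedModule.mk_smul_mk,
        hr0]
      exact LocalizedModule.zero_mk _

end Aux

lemma sComp_mono {R M : Type*} [CommRing R] [AddCommGroup M] [Module R M]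
    {S₁ S₂ : Set R} (h : S₁ ⊆ S₂) : sComp R M S₁ ⊥ ⊆ sComp R M S₂ ⊥ := by
  rintro x ⟨s, hs, hs0⟩
  exact ⟨s, h hs, hs0⟩


/-- a prime `𝔓` of `R_S` is Krull-associated to `M_S` iff its
preimage `𝔓 ∩ R` is Krull-associated to `M`. -/
theorem statement9 {R M : Type*} [CommRing R] [AddCommGroup M] [Module R M]
    (S : Submonoid R) (𝔓 : Ideal (Localization S)) [𝔓.IsPrime] :
    KrullAssociated (Localization S) (LocalizedModule S M) 𝔓 ↔
      KrullAssociated R M (𝔓.comap (algebraMap R (Localization S))) := by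
  set φ := algebraMap R (Localization S) with hφ
  set p := 𝔓.comap φ with hpdef
  have hp : p.IsPrime := Ideal.IsPrime.comap _
  have one_not : (1 : Localization S) ∉ 𝔓 := fun h =>
    ‹𝔓.IsPrime›.1 ((Ideal.eq_top_iff_one _).2 h)
  have hmonoL : ∀ S₁ S₂ : Set (Localization S), S₁ ⊆ S₂ →
      sComp (Localization S) (LocalizedModule S M) S₁ ⊥ ⊆
        sComp (Localization S) (LocalizedModule S M) S₂ ⊥ := by
    rintro S₁ S₂ h x ⟨s, hs, hs0⟩
    exact ⟨s, h hs, hs0⟩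
  constructor
  · -- 𝔓 Krull-associated to M_S → p Krull-associated to M
    intro H T hT
    set T' : Submonoid (Localization S) :=
      { carrier := {z | ∃ t ∈ T, ∃ w ∉ 𝔓, z = φ t * w}
        one_mem' := ⟨1, T.one_mem, 1, one_not, by simp⟩
        mul_mem' := by
          rintro z₁ z₂ ⟨t₁, ht₁, w₁, hw₁, rfl⟩ ⟨t₂, ht₂, w₂, hw₂, rfl⟩
          refine ⟨t₁ * t₂, T.mul_mem ht₁ ht₂, w₁ * w₂, ?_, by rw [map_mul]; ring⟩
          intro h
          rcases ‹𝔓.IsPrime›.mul_mem_iff_mem_or_mem.1 h with h | h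
          · exact hw₁ h
          · exact hw₂ h } with hT'def
    have hmemT' : ∀ z : Localization S, z ∈ T' ↔ ∃ t ∈ T, ∃ w ∉ 𝔓, z = φ t * w :=
      fun z => Iff.rfl
    have hsub : ((𝔓 : Set (Localization S)))ᶜ ⊆ (T' : Set (Localization S)) := by
      intro w hw
      exact (hmemT' w).2 ⟨1, T.one_mem, w, hw, by simp⟩
    obtain ⟨t₀, ht₀T, ht₀p⟩ : ∃ t₀, t₀ ∈ T ∧ t₀ ∈ p := by
      obtain ⟨t₀, h1, h2⟩ := Set.exists_of_ssubset hT
      exact ⟨t₀, h1, by simpa using h2⟩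
    have hstrict : ((𝔓 : Set (Localization S)))ᶜ ⊂ (T' : Set (Localization S)) := by
      refine ⟨hsub, fun hba => ?_⟩
      have hmem : φ t₀ ∈ T' := (hmemT' _).2 ⟨t₀, ht₀T, 1, one_not, by simp⟩
      exact (hba hmem) (Ideal.mem_comap.1 ht₀p)
    obtain ⟨hss, hne⟩ := H T' hstrict
    rw [Set.not_subset] at hne
    obtain ⟨z, hzT', hz𝔓⟩ := hne
    obtain ⟨⟨x, u⟩, rfl⟩ : ∃ y : M × S, z = LocalizedModule.mk y.1 y.2 :=
      LocalizedModule.induction_on (fun m s => ⟨⟨m, s⟩, rfl⟩) z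
    obtain ⟨τ, hτ, hτ0⟩ := hzT'
    obtain ⟨t, htT, w, hw𝔓, rfl⟩ := (hmemT' τ).1 hτ
    obtain ⟨⟨b, v⟩, rfl⟩ : ∃ y : R × S, w = Localization.mk y.1 y.2 :=
      Localization.induction_on w fun y => ⟨y, rfl⟩
    rw [lmk_mem_iff] at hw𝔓
    rw [Submodule.mem_bot, hφ, ← Localization.mk_one_eq_algebraMap, Localization.mk_mul,
      LocalizedModule.mk_smul_mk, lmk_eq_zero] at hτ0
    obtain ⟨c, hc⟩ := hτ0
    have hynot : ((c : R) * b) • x ∉ sComp R M ((p : Set R)ᶜ) ⊥ := by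
      rintro ⟨r, hr, hr0⟩
      rw [Set.mem_compl_iff, SetLike.mem_coe] at hr
      rw [Submodule.mem_bot, smul_smul] at hr0
      apply hz𝔓
      rw [mk_mem_sComp_iff]
      refine ⟨r * ((c : R) * b), ?_, Submodule.mem_bot _ |>.2 hr0⟩
      rw [Set.mem_compl_iff, SetLike.mem_coe, hp.mul_mem_iff_mem_or_mem]
      rintro (h | h)
      · exact hr h
      · rcases hp.mul_mem_iff_mem_or_mem.1 h with h | h
        · exact coe_not_mem_comap S 𝔓 c h
        · exact hw𝔓 h
    have hymem : ((c : R) * b) • x ∈ sComp R M (T : Set R) ⊥ := by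
      refine ⟨t, htT, ?_⟩
      rw [Submodule.mem_bot, smul_smul, show t * ((c : R) * b) = (c : R) * (t * b) by ring,
        mul_smul]
      exact hc
    refine ⟨sComp_mono (subset_of_ssubset hT), fun hcon => hynot (hcon hymem)⟩
  · -- p Krull-associated to M → 𝔓 Krull-associated to M_S
    intro H T' hT'
    set T : Submonoid R := T'.comap (φ : R →+* Localization S).toMonoidHom with hTdef
    have hmemT : ∀ r : R, r ∈ T ↔ φ r ∈ T' := fun r => Iff.rfl
    have hsub : ((p : Set R))ᶜ ⊆ (T : Set R) := by
      intro r hr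
      rw [Set.mem_compl_iff, SetLike.mem_coe] at hr
      exact (hmemT r).2 (subset_of_ssubset hT' (by simpa [hpdef, Ideal.mem_comap] using hr))
    obtain ⟨z, hzT', hz𝔓⟩ : ∃ z, z ∈ T' ∧ z ∈ 𝔓 := by
      obtain ⟨z, h1, h2⟩ := Set.exists_of_ssubset hT'
      exact ⟨z, h1, by simpa using h2⟩
    obtain ⟨⟨a, s⟩, rfl⟩ : ∃ y : R × S, z = Localization.mk y.1 y.2 :=
      Localization.induction_on z fun y => ⟨y, rfl⟩
    have hφs : φ (s : R) ∈ T' := subset_of_ssubset hT' (by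
      simpa [Ideal.mem_comap] using coe_not_mem_comap S 𝔓 s)
    have haT : a ∈ T := by
      rw [hmemT, ← mk_mul_algebraMap S a s]
      exact T'.mul_mem hzT' hφs
    have hap : a ∈ p := by
      rw [hpdef, Ideal.mem_comap, ← mk_mul_algebraMap S a s]
      exact Ideal.mul_mem_right _ _ hz𝔓
    have hstrict : ((p : Set R))ᶜ ⊂ (T : Set R) := by
      refine ⟨hsub, fun hba => ?_⟩
      exact (hba haT) hap
    obtain ⟨hss, hne⟩ := H T hstrict
    rw [Set.not_subset] at hne
    obtain ⟨x, hxT, hxp⟩ := hne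
    obtain ⟨t, htT, ht0⟩ := hxT
    rw [Submodule.mem_bot] at ht0
    have hymem : (LocalizedModule.mk x 1 : LocalizedModule S M) ∈
        sComp (Localization S) (LocalizedModule S M) (T' : Set (Localization S)) ⊥ := by
      refine ⟨φ t, (hmemT t).1 htT, ?_⟩
      rw [Submodule.mem_bot, hφ, ← Localization.mk_one_eq_algebraMap,
        LocalizedModule.mk_smul_mk, ht0]
      exact LocalizedModule.zero_mk _
    have hynot : (LocalizedModule.mk x 1 : LocalizedModule S M) ∉
        sComp (Localization S) (LocalizedModule S M) ((𝔓 : Set _)ᶜ) ⊥ := by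
      rw [mk_mem_sComp_iff]
      exact hxp
    exact ⟨hmonoL _ _ (subset_of_ssubset hT'), fun hcon => hynot (hcon hymem)⟩
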